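/- Let x ∈ ℤ₂ (the 2-adic integers) satisfy |x − 3|₂ = 1, i.e. x − 3 is a unit in ℤ₂. Then: (i) the series S(x) = ∑_{k=1}^∞ C_{k−1}·2^k·(x−3)^{−2k} converges in ℚ₂, where C_m denotes the m-th Catalan number; (ii) T(x) := x² − 4x + 2 − (x−1)(x−3)·S(x) lies in ℤ₂ and satisfies T(x) ≡ x² (mod 2ℤ₂); and (iii) |T(x) − 3|₂ = |x − 3|₂² = 1, so the set {x ∈ ℤ₂ : |x−3|₂ = 1} is mapped to itself by T. -/

import Mathlib

/-- The series `S(x) = ∑_{k≥1} C_{k-1}·2^k/(x-3)^{2k}` (with `C_m` the `m`-th Catalan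
number), viewed in `ℚ₂`. -/
noncomputable def Tseries (x : ℤ_[2]) : ℚ_[2] :=
  ∑' k : ℕ, (catalan k : ℚ_[2]) * 2 ^ (k + 1) / ((x : ℚ_[2]) - 3) ^ (2 * (k + 1))

/-- The 2-adic function `T(x) = x² - 4x + 2 - (x-1)(x-3)·S(x)`. -/
noncomputable def Tfrob (x : ℤ_[2]) : ℚ_[2] :=
  (x : ℚ_[2]) ^ 2 - 4 * (x : ℚ_[2]) + 2 -
    ((x : ℚ_[2]) - 1) * ((x : ℚ_[2]) - 3) * Tseries x

theorem Tfrob_lift (x : ℤ_[2]) (hx : ‖x - 3‖ = 1) :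
    Summable (fun k : ℕ =>
      (catalan k : ℚ_[2]) * 2 ^ (k + 1) / ((x : ℚ_[2]) - 3) ^ (2 * (k + 1))) ∧
    ‖Tfrob x‖ ≤ 1 ∧
    ‖Tfrob x - (x : ℚ_[2]) ^ 2‖ ≤ 2⁻¹ ∧
    ‖Tfrob x - 3‖ = ‖x - 3‖ ^ 2 ∧ ‖Tfrob x - 3‖ = 1 := by
  have hu : ‖(x : ℚ_[2]) - 3‖ = 1 := by
    have h : ((x - 3 : ℤ_[2]) : ℚ_[2]) = (x : ℚ_[2]) - 3 := by
      push_cast [show ((3:ℤ_[2]):ℚ_[2]) = 3 from rfl]; ring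
    rw [← h, PadicInt.padic_norm_e_of_padicInt, hx]
  have h2 : ‖(2 : ℚ_[2])‖ = 2⁻¹ := by
    simpa using Padic.norm_p (p := 2)
  have hmax : ∀ a b : ℚ_[2], ‖a - b‖ ≤ max ‖a‖ ‖b‖ := fun a b => by
    simpa [sub_eq_add_neg] using Padic.nonarchimedean a (-b)
  have hint : ∀ z : ℤ_[2], ∀ a : ℚ_[2], (z : ℚ_[2]) = a → ‖a‖ ≤ 1 := by
    rintro z a rfl
    rw [PadicInt.padic_norm_e_of_padicInt]; exact PadicInt.norm_le_one _
  have c2 : ((2:ℤ_[2]):ℚ_[2]) = 2 := rfl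
  have c3 : ((3:ℤ_[2]):ℚ_[2]) = 3 := rfl
  have c4 : ((4:ℤ_[2]):ℚ_[2]) = 4 := rfl
  -- term bound
  have hterm : ∀ k : ℕ,
      ‖(catalan k : ℚ_[2]) * 2 ^ (k + 1) / ((x : ℚ_[2]) - 3) ^ (2 * (k + 1))‖
        ≤ (2⁻¹ : ℝ) ^ (k + 1) := by
    intro k
    rw [norm_div, norm_mul, norm_pow, norm_pow, hu, one_pow, div_one, h2]
    calc ‖(catalan k : ℚ_[2])‖ * (2⁻¹ : ℝ) ^ (k + 1)
        ≤ 1 * (2⁻¹ : ℝ) ^ (k + 1) :=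
          mul_le_mul_of_nonneg_right
            (hint (catalan k : ℤ_[2]) _ (by push_cast; rfl)) (by positivity)
      _ = (2⁻¹ : ℝ) ^ (k + 1) := one_mul _
  have hsum : Summable (fun k : ℕ =>
      (catalan k : ℚ_[2]) * 2 ^ (k + 1) / ((x : ℚ_[2]) - 3) ^ (2 * (k + 1))) := by
    refine Summable.of_norm_bounded (g := fun k => (2⁻¹ : ℝ) ^ (k + 1)) ?_ hterm
    exact (summable_geometric_of_lt_one (by norm_num) (by norm_num)).comp_injective
      (add_left_injective 1)
  -- norm of the series ≤ 1/2
  have hS : ‖Tseries x‖ ≤ 2⁻¹ := by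
    refine IsUltrametricDist.norm_tsum_le_of_forall_le_of_nonneg (by norm_num) ?_
    intro k
    refine (hterm k).trans ?_
    calc ((2:ℝ)⁻¹) ^ (k + 1) ≤ (2⁻¹ : ℝ) ^ 1 :=
          pow_le_pow_of_le_one (by norm_num) (by norm_num) (Nat.le_add_left 1 k)
      _ = 2⁻¹ := pow_one _
  have hx1 : ‖(x : ℚ_[2]) - 1‖ ≤ 1 := hint (x - 1) _ (by push_cast; ring)
  have hB : ‖((x : ℚ_[2]) - 1) * ((x : ℚ_[2]) - 3) * Tseries x‖ ≤ 2⁻¹ := by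
    rw [norm_mul, norm_mul, hu, mul_one]
    calc ‖(x : ℚ_[2]) - 1‖ * ‖Tseries x‖ ≤ 1 * 2⁻¹ :=
          mul_le_mul hx1 hS (norm_nonneg _) zero_le_one
      _ = 2⁻¹ := one_mul _
  refine ⟨hsum, ?_, ?_, ?_, ?_⟩
  · -- ‖Tfrob x‖ ≤ 1
    refine (hmax _ _).trans (max_le ?_ (hB.trans (by norm_num)))
    exact hint (x ^ 2 - 4 * x + 2) _ (by push_cast [c2, c4]; ring)
  · -- ‖Tfrob x - x²‖ ≤ 1/2
    have heq : Tfrob x - (x : ℚ_[2]) ^ 2 =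
        (2 - 4 * (x : ℚ_[2])) - ((x : ℚ_[2]) - 1) * ((x : ℚ_[2]) - 3) * Tseries x := by
      unfold Tfrob; ring
    rw [heq]
    refine (hmax _ _).trans (max_le ?_ hB)
    have : (2 - 4 * (x : ℚ_[2])) = 2 * (1 - 2 * (x : ℚ_[2])) := by ring
    rw [this, norm_mul, h2]
    calc (2⁻¹ : ℝ) * ‖1 - 2 * (x : ℚ_[2])‖ ≤ 2⁻¹ * 1 :=
          mul_le_mul_of_nonneg_left (hint (1 - 2 * x) _ (by push_cast [c2]; ring))
            (by norm_num)
      _ = 2⁻¹ := mul_one _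
  all_goals {
    have hx1' : ‖(x : ℚ_[2]) - 1‖ = 1 := by
      have heq : (x : ℚ_[2]) - 1 = ((x : ℚ_[2]) - 3) + 2 := by ring
      rw [heq, Padic.add_eq_max_of_ne (by rw [hu, h2]; norm_num), hu, h2]
      norm_num
    have hq : ‖(x : ℚ_[2]) ^ 2 - 4 * (x : ℚ_[2]) - 1‖ = 1 := by
      have heq : (x : ℚ_[2]) ^ 2 - 4 * (x : ℚ_[2]) - 1 =
          ((x : ℚ_[2]) - 3) * ((x : ℚ_[2]) - 1) + (-4) := by ring
      have h4 : ‖(-4 : ℚ_[2])‖ = 4⁻¹ := by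
        have : (-4 : ℚ_[2]) = -(2 * 2) := by norm_num
        rw [this, norm_neg, norm_mul, h2]; norm_num
      rw [heq, Padic.add_eq_max_of_ne (by rw [norm_mul, hu, hx1', h4]; norm_num),
        norm_mul, hu, hx1', h4]
      norm_num
    have key : ‖Tfrob x - 3‖ = 1 := by
      have heq : Tfrob x - 3 = ((x : ℚ_[2]) ^ 2 - 4 * (x : ℚ_[2]) - 1) +
          (-(((x : ℚ_[2]) - 1) * ((x : ℚ_[2]) - 3) * Tseries x)) := by
        unfold Tfrob; ring
      have hne : ‖(x : ℚ_[2]) ^ 2 - 4 * (x : ℚ_[2]) - 1‖ ≠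
          ‖-(((x : ℚ_[2]) - 1) * ((x : ℚ_[2]) - 3) * Tseries x)‖ := by
        rw [hq, norm_neg]
        intro h
        rw [← h] at hB
        norm_num at hB
      rw [heq, Padic.add_eq_max_of_ne hne, hq, norm_neg]
      exact max_eq_left (hB.trans (by norm_num))
    first
      | (rw [key, hx]; norm_num)
      | exact key
  }
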